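/- There is no measurable function r : X → ℂ with |r(x)| = 1 for μ_X-almost every x such that for every k ≥ 1, r(x+δ_k) = (−1)^k · r(x) for μ_X-almost every x ∈ X. -/

import Mathlib

/-!
Common setup: `GWX` is the compact abelian group `X = ∏_{k ≥ 1} {0,1}` of 0-1 sequences
(with componentwise addition mod 2 and the product σ-algebra, which is generated by the
sets `X_k = {x : x_k = 1}`).  The coordinate `i : ℕ` of `x : GWX` represents the paper's
coordinate `x_{i+1}`, so the Lean index `k : ℕ` corresponds to the paper's index `k + 1`
throughout; in particular the paper's sign `(-1)^k` becomes `(-1)^(k+1)` here.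
-/

open MeasureTheory Complex Filter
open scoped ENNReal

noncomputable section

abbrev GWX : Type := ℕ → ZMod 2

/-- `δ_k`: the sequence with `1` in the `k`-th place (the paper's `(k+1)`-th place)
and `0` elsewhere. -/
def gwDelta (k : ℕ) : GWX := fun i => if i = k then 1 else 0

/-- The componentwise complement `x ↦ 1 - x`. -/
def gwFlip (x : GWX) : GWX := fun i => 1 - x i

/-- The sign `(-1)^{x_1 + ⋯ + x_{k-1} + 1}` of the paper, for the paper's index `k + 1`. -/
def gwSign (k : ℕ) (x : GWX) : ℂ := (-1 : ℂ) ^ ((∑ i ∈ Finset.range k, (x i).val) + 1)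

/-- there is no measurable unimodular function `r : X → ℂ` with
`r(x + δ_k) = (-1)^k r(x)` `μ_X`-a.e. for every `k ≥ 1` (here `(-1)^(k+1)`, since the Lean
index `k` is the paper's `k + 1`); `μ_X` is the Haar probability measure on `X`,
characterized as a translation-invariant probability measure. -/
def gwProj (n : ℕ) : GWX → (Fin n → ZMod 2) := fun x i => x i

lemma gwProj_measurable (n : ℕ) : Measurable (gwProj n) :=
  measurable_pi_lambda _ fun i => measurable_pi_apply _

def gwF : Filtration ℕ (inferInstance : MeasurableSpace GWX) where
  seq n := MeasurableSpace.comap (gwProj n) inferInstance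
  mono' := by
    intro n m hnm
    show MeasurableSpace.comap (gwProj n) inferInstance ≤
      MeasurableSpace.comap (gwProj m) inferInstance
    rw [show gwProj n = (fun v (i : Fin n) => v (Fin.castLE hnm i)) ∘ gwProj m from rfl,
      ← MeasurableSpace.comap_comp]
    exact MeasurableSpace.comap_mono
      ((measurable_pi_lambda _ fun i => measurable_pi_apply _).comap_le)
  le' n := (gwProj_measurable n).comap_le

lemma gwF_iSup : (⨆ n, gwF n) = (inferInstance : MeasurableSpace GWX) := by
  refine le_antisymm (iSup_le fun n => gwF.le n) ?_
  have : (inferInstance : MeasurableSpace GWX)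
      = ⨆ i : ℕ, MeasurableSpace.comap (fun x : GWX => x i) inferInstance := rfl
  refine le_trans (le_of_eq this) (iSup_le fun i => ?_)
  refine le_trans ?_ (le_iSup _ (i + 1))
  rw [show (fun x : GWX => x i)
      = (fun v : Fin (i+1) → ZMod 2 => v ⟨i, Nat.lt_succ_self i⟩) ∘ gwProj (i+1) from rfl,
    ← MeasurableSpace.comap_comp]
  exact MeasurableSpace.comap_mono (measurable_pi_apply _).comap_le

lemma gw_eq_of_comap {γ : Type*} [MeasurableSpace γ] [MeasurableSingletonClass γ]
    {n : ℕ} {f : GWX → γ} (hf : Measurable[gwF n] f) {x y : GWX}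
    (hxy : gwProj n x = gwProj n y) : f x = f y := by
  obtain ⟨s, -, hs⟩ := hf (measurableSet_singleton (f x))
  have hx : x ∈ f ⁻¹' {f x} := rfl
  rw [← hs] at hx
  have hy : y ∈ gwProj n ⁻¹' s := by simpa [Set.mem_preimage, ← hxy] using hx
  rw [hs] at hy
  exact (hy : f y = f x).symm

theorem no_measurable_alternating_cocycle
    (μX : Measure GWX) [IsProbabilityMeasure μX]
    (hHaar : ∀ y : GWX, μX.map (· + y) = μX) :
    ¬ ∃ r : GWX → ℂ, Measurable r ∧
        (∀ᵐ x ∂μX, ‖r x‖ = 1) ∧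
        (∀ k : ℕ, ∀ᵐ x ∂μX, r (x + gwDelta k) = (-1 : ℂ) ^ (k + 1) * r x) := by
  rintro ⟨r, hrm, hru, hrc⟩
  -- r is integrable
  have hru' : ∀ᵐ x ∂μX, ‖r x‖ = 1 := by
    filter_upwards [hru] with x hx using hx
  have hri : Integrable r μX :=
    ⟨hrm.aestronglyMeasurable,
      HasFiniteIntegral.of_bounded (C := 1) (hru'.mono fun x hx => hx.le)⟩
  have hrem : Measurable fun x => (r x).re := Complex.measurable_re.comp hrm
  have himm : Measurable fun x => (r x).im := Complex.measurable_im.comp hrm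
  have hresm : StronglyMeasurable[⨆ n, gwF n] fun x => (r x).re := by
    rw [gwF_iSup]; exact hrem.stronglyMeasurable
  have himsm : StronglyMeasurable[⨆ n, gwF n] fun x => (r x).im := by
    rw [gwF_iSup]; exact himm.stronglyMeasurable
  have h1 := Integrable.tendsto_eLpNorm_condExp hri.re (ℱ := gwF) hresm
  have h2 := Integrable.tendsto_eLpNorm_condExp hri.im (ℱ := gwF) himsm
  have hq : (0 : ℝ≥0∞) < 1/4 := by norm_num
  obtain ⟨n, hn1, hn2⟩ :=
    ((h1.eventually (gt_mem_nhds hq)).and (h2.eventually (gt_mem_nhds hq))).exists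
  set gre : GWX → ℝ := μX[(fun x => (r x).re)|gwF n] with hgre
  set gim : GWX → ℝ := μX[(fun x => (r x).im)|gwF n] with hgim
  have hgrem : Measurable[gwF n] gre := stronglyMeasurable_condExp.measurable
  have hgimm : Measurable[gwF n] gim := stronglyMeasurable_condExp.measurable
  set g : GWX → ℂ := fun x => (gre x : ℂ) + (gim x : ℂ) * Complex.I with hg
  have hgFm : Measurable[gwF n] g :=
    (Complex.measurable_ofReal.comp hgrem).add
      ((Complex.measurable_ofReal.comp hgimm).mul_const Complex.I)
  have hgm : Measurable g := hgFm.mono (gwF.le n) le_rfl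
  set k := 2 * n with hk
  -- g is invariant under adding δ_k
  have hginv : ∀ x, g (x + gwDelta k) = g x := by
    intro x
    refine gw_eq_of_comap hgFm ?_
    funext i
    show x i.val + (if (i : ℕ) = k then 1 else 0) = x i.val
    have := i.isLt
    rw [if_neg (by omega), add_zero]
  -- the sign at k is -1
  have hsign : ((-1 : ℂ)) ^ (k + 1) = -1 := Odd.neg_one_pow ⟨n, by omega⟩
  -- translation map is measurable
  have hT : Measurable (fun x : GWX => x + gwDelta k) :=
    measurable_pi_lambda _ fun i =>
      (measurable_of_countable (fun a : ZMod 2 => a + gwDelta k i)).comp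
        (measurable_pi_apply i)
  set A := ∫⁻ x, (‖r x - g x‖₊ : ℝ≥0∞) ∂μX with hA
  set B := ∫⁻ x, (‖r x + g x‖₊ : ℝ≥0∞) ∂μX with hB
  -- A is small
  have hAsmall : A < 1/2 := by
    have hptw : ∀ x, (‖r x - g x‖₊ : ℝ≥0∞)
        ≤ (‖(r x).re - gre x‖₊ : ℝ≥0∞) + (‖(r x).im - gim x‖₊ : ℝ≥0∞) := by
      intro x
      have hd : r x - g x
          = (((r x).re - gre x : ℝ) : ℂ) + (((r x).im - gim x : ℝ) : ℂ) * Complex.I := by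
        rw [hg]
        conv_lhs => rw [← Complex.re_add_im (r x)]
        push_cast
        ring
      rw [hd]
      refine le_trans (ENNReal.coe_le_coe.2 (nnnorm_add_le _ _)) ?_
      rw [ENNReal.coe_add]
      gcongr
      · simp [← Complex.ofReal_sub]
      · simp [nnnorm_mul, ← Complex.ofReal_sub]
    have hmre : Measurable fun x => ((‖(r x).re - gre x‖₊ : ℝ≥0∞)) :=
      (hrem.sub (hgrem.mono (gwF.le n) le_rfl)).enorm
    have hmim : Measurable fun x => ((‖(r x).im - gim x‖₊ : ℝ≥0∞)) :=
      (himm.sub (hgimm.mono (gwF.le n) le_rfl)).enorm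
    calc A ≤ ∫⁻ x, ((‖(r x).re - gre x‖₊ : ℝ≥0∞) + (‖(r x).im - gim x‖₊ : ℝ≥0∞)) ∂μX :=
          lintegral_mono hptw
      _ = (∫⁻ x, (‖(r x).re - gre x‖₊ : ℝ≥0∞) ∂μX)
          + ∫⁻ x, (‖(r x).im - gim x‖₊ : ℝ≥0∞) ∂μX := lintegral_add_left hmre _
      _ < 1/4 + 1/4 := by
          refine ENNReal.add_lt_add ?_ ?_
          · refine lt_of_le_of_lt (le_of_eq ?_) hn1
            rw [eLpNorm_one_eq_lintegral_enorm]
            refine lintegral_congr fun x => ?_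
            rw [Pi.sub_apply, ← neg_sub, nnnorm_neg]
            rfl
          · refine lt_of_le_of_lt (le_of_eq ?_) hn2
            rw [eLpNorm_one_eq_lintegral_enorm]
            refine lintegral_congr fun x => ?_
            rw [Pi.sub_apply, ← neg_sub, nnnorm_neg]
            rfl
      _ = 1/2 := by
          rw [ENNReal.div_add_div_same]
          exact (ENNReal.toReal_eq_toReal_iff' (by simp [ENNReal.div_eq_top])
            (by simp [ENNReal.div_eq_top])).mp (by norm_num)
  -- A = B by translation invariance
  have hABeq : A = B := by
    conv_lhs => rw [hA, ← hHaar (gwDelta k)]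
    rw [lintegral_map (f := fun x => (‖r x - g x‖₊ : ℝ≥0∞)) (hrm.sub hgm).enorm hT]
    refine lintegral_congr_ae ?_
    filter_upwards [hrc k] with x hx
    rw [hx, hsign, hginv]
    congr 1
    rw [show -1 * r x - g x = -(r x + g x) by ring, nnnorm_neg]
  -- but A + B ≥ 2
  have hAB2 : (2 : ℝ≥0∞) ≤ A + B := by
    calc (2 : ℝ≥0∞) = ∫⁻ _x, (2 : ℝ≥0∞) ∂μX := by simp
      _ = ∫⁻ x, (‖(r x - g x) + (r x + g x)‖₊ : ℝ≥0∞) ∂μX := by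
          refine lintegral_congr_ae ?_
          filter_upwards [hru'] with x hx
          rw [show (r x - g x) + (r x + g x) = 2 * r x by ring,
            ← enorm_eq_nnnorm, ← ofReal_norm, norm_mul, hx, mul_one]
          norm_num
      _ ≤ ∫⁻ x, ((‖r x - g x‖₊ : ℝ≥0∞) + (‖r x + g x‖₊ : ℝ≥0∞)) ∂μX :=
          lintegral_mono fun x => le_trans (ENNReal.coe_le_coe.2 (nnnorm_add_le _ _))
            (le_of_eq (ENNReal.coe_add _ _))
      _ = A + B := lintegral_add_left (hrm.sub hgm).enorm _
  have : (2 : ℝ≥0∞) < 1 := by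
    refine lt_of_le_of_lt hAB2 ?_
    rw [← hABeq]
    calc A + A < 1/2 + 1/2 := ENNReal.add_lt_add hAsmall hAsmall
      _ = 1 := by
          rw [ENNReal.div_add_div_same]
          exact (ENNReal.toReal_eq_toReal_iff' (by simp [ENNReal.div_eq_top])
            (by simp)).mp (by norm_num)
  norm_num at this
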